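/- Let n ≥ 1 and let F be a facet of Δ(n) with elements listed in increasing order as v_1, …, v_r, where v_ℓ = (i_ℓ, j_ℓ, k_ℓ). Fix ℓ with 1 ≤ ℓ ≤ r and a coordinate position a ∈ {first, second, third} such that a_ℓ - a_{ℓ-1} > 1 if ℓ ≥ 2, or a_1 > 1 if ℓ = 1 (where a_m denotes the a-coordinate of v_m). Let v' be the triple obtained from v_ℓ by decreasing its a-coordinate by 1, and let G = (F \ {v_ℓ}) ∪ {v'}. Suppose the down-twist is safe, i.e.: if ℓ < r, then min over the three coordinates of (v_{ℓ+1} minus v') equals 1; and if ℓ = r, then the maximum coordinate of v' equals n. Then G is a facet of Δ(n). -/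

import Mathlib

/-- Vertices of `Δ(n)`: integer triples. -/
abbrev V : Type := ℕ × ℕ × ℕ

/-- The strict componentwise order on triples. -/
def slt (u v : V) : Prop := u.1 < v.1 ∧ u.2.1 < v.2.1 ∧ u.2.2 < v.2.2

/-- A face of `Δ(n)`: a finite subset of `{1,…,n}³` that is a chain under `slt`. -/
def IsFace (n : ℕ) (F : Finset V) : Prop :=
  (∀ v ∈ F, v.1 ∈ Finset.Icc 1 n ∧ v.2.1 ∈ Finset.Icc 1 n ∧ v.2.2 ∈ Finset.Icc 1 n) ∧
  (∀ u ∈ F, ∀ v ∈ F, u ≠ v → slt u v ∨ slt v u)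

/-- A facet of `Δ(n)`: an inclusion-maximal face. -/
def IsFacet (n : ℕ) (F : Finset V) : Prop :=
  IsFace n F ∧ ∀ G : Finset V, IsFace n G → F ⊆ G → F = G

/-- The `a`-th coordinate of a triple. -/
def coord (a : Fin 3) (v : V) : ℕ := ![v.1, v.2.1, v.2.2] a

/-- Replace the `a`-th coordinate of a triple by `x`. -/
def setCoord (a : Fin 3) (x : ℕ) (v : V) : V :=
  if a = 0 then (x, v.2.1, v.2.2) else if a = 1 then (v.1, x, v.2.2) else (v.1, v.2.1, x)

instance : IsTrans V slt :=
  ⟨fun _ _ _ h1 h2 => ⟨h1.1.trans h2.1, h1.2.1.trans h2.2.1, h1.2.2.trans h2.2.2⟩⟩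

lemma slt_iff_coord (u w : V) : slt u w ↔ ∀ b : Fin 3, coord b u < coord b w := by
  constructor
  · rintro ⟨h1, h2, h3⟩ b
    fin_cases b
    · exact h1
    · exact h2
    · exact h3
  · intro h
    exact ⟨h 0, h 1, h 2⟩

lemma coord_setCoord_self (a : Fin 3) (x : ℕ) (v : V) : coord a (setCoord a x v) = x := by
  fin_cases a <;> simp [coord, setCoord]

lemma coord_setCoord_ne {a b : Fin 3} (h : b ≠ a) (x : ℕ) (v : V) :
    coord b (setCoord a x v) = coord b v := by
  fin_cases a <;> fin_cases b <;> simp_all [coord, setCoord]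

lemma range_iff_coord (n : ℕ) (v : V) :
    (v.1 ∈ Finset.Icc 1 n ∧ v.2.1 ∈ Finset.Icc 1 n ∧ v.2.2 ∈ Finset.Icc 1 n) ↔
      ∀ b : Fin 3, coord b v ∈ Finset.Icc 1 n := by
  constructor
  · rintro ⟨h1, h2, h3⟩ b
    fin_cases b
    · exact h1
    · exact h2
    · exact h3
  · intro h
    exact ⟨h 0, h 1, h 2⟩

/-- Safe down-twists of facets are facets (Lemma 4.6, down-twist case).
`L` lists the facet `F` in increasing order; `ℓ` is the (0-based) index of the twisted
vertex, `a` the coordinate being decreased.  The twist is possible (`hgap0`/`hgap1`) and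
safe (`hsafe_mid`/`hsafe_last`). -/
theorem safe_down_twist_is_facet (n : ℕ) (hn : 1 ≤ n) (F : Finset V) (hF : IsFacet n F)
    (L : List V) (hsort : L.Chain' slt) (htf : L.toFinset = F)
    (ℓ : ℕ) (hℓ : ℓ < L.length) (a : Fin 3) (v' : V)
    (hv' : v' = setCoord a (coord a (L.get ⟨ℓ, hℓ⟩) - 1) (L.get ⟨ℓ, hℓ⟩))
    (hgap0 : ℓ = 0 → 1 < coord a (L.get ⟨ℓ, hℓ⟩))
    (hgap1 : 0 < ℓ → 1 < coord a (L.get ⟨ℓ, hℓ⟩) - coord a (L.get ⟨ℓ - 1, by omega⟩))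
    (hsafe_mid : ∀ h : ℓ + 1 < L.length,
      min ((L.get ⟨ℓ + 1, h⟩).1 - v'.1)
        (min ((L.get ⟨ℓ + 1, h⟩).2.1 - v'.2.1) ((L.get ⟨ℓ + 1, h⟩).2.2 - v'.2.2)) = 1)
    (hsafe_last : ℓ + 1 = L.length → max v'.1 (max v'.2.1 v'.2.2) = n) :
    IsFacet n (insert v' (F.erase (L.get ⟨ℓ, hℓ⟩))) := by
  set v : V := L.get ⟨ℓ, hℓ⟩ with hvdef
  -- basic list facts
  have hpw : ∀ (i j : ℕ) (hi : i < L.length) (hj : j < L.length), i < j →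
      slt (L.get ⟨i, hi⟩) (L.get ⟨j, hj⟩) := by
    have hp := List.isChain_iff_pairwise.mp hsort
    rw [List.pairwise_iff_getElem] at hp
    intro i j hi hj hij
    simpa [List.get_eq_getElem] using hp i j hi hj hij
  have hmem : ∀ u ∈ F, ∃ (m : ℕ) (hm : m < L.length), L.get ⟨m, hm⟩ = u := by
    intro u hu
    rw [← htf, List.mem_toFinset, List.mem_iff_getElem] at hu
    obtain ⟨m, hm, he⟩ := hu
    exact ⟨m, hm, by simpa [List.get_eq_getElem] using he⟩
  have hvF : v ∈ F := by
    rw [← htf, List.mem_toFinset]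
    exact L.get_mem _
  -- coordinates of v'
  have hv'a : coord a v' = coord a v - 1 := by rw [hv']; exact coord_setCoord_self _ _ _
  have hv'b : ∀ b : Fin 3, b ≠ a → coord b v' = coord b v := by
    intro b hb; rw [hv']; exact coord_setCoord_ne hb _ _
  have hv'le : ∀ b : Fin 3, coord b v' ≤ coord b v := by
    intro b
    by_cases hb : b = a
    · subst hb; rw [hv'a]; omega
    · rw [hv'b b hb]
  have hvrange := (range_iff_coord n v).mp (hF.1.1 v hvF)
  -- coord a v ≥ 2
  have hca : 2 ≤ coord a v := by
    rcases Nat.eq_zero_or_pos ℓ with h0 | h0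
    · have := hgap0 h0; omega
    · have hg := hgap1 h0
      have hprev : L.get ⟨ℓ - 1, by omega⟩ ∈ F := by
        rw [← htf, List.mem_toFinset]; exact L.get_mem _
      have := (range_iff_coord n _).mp (hF.1.1 _ hprev) a
      simp [Finset.mem_Icc] at this
      omega
  -- comparability of v' with elements of F other than v
  have hcmp : ∀ u ∈ F, u ≠ v → slt u v' ∨ slt v' u := by
    intro u huF hune
    obtain ⟨m, hm, hme⟩ := hmem u huF
    rcases lt_trichotomy m ℓ with hlt | heq | hgt
    · -- u is before v; use the gap
      left
      rw [slt_iff_coord]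
      intro b
      have hlv : slt u v := hme ▸ hpw m ℓ hm hℓ hlt
      have hub : coord b u < coord b v := (slt_iff_coord u v).mp hlv b
      by_cases hb : b = a
      · subst hb
        have hg := hgap1 (by omega)
        have hprev : coord b u ≤ coord b (L.get ⟨ℓ - 1, by omega⟩) := by
          rcases Nat.lt_or_ge m (ℓ - 1) with h | h
          · exact le_of_lt ((slt_iff_coord _ _).mp (hme ▸ hpw m (ℓ - 1) hm (by omega) h) b)
          · have : m = ℓ - 1 := by omega
            subst this
            rw [hme]
        rw [hv'a]
        omega
      · rw [hv'b b hb]; exact hub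
    · subst heq
      exact absurd hme.symm hune
    · -- u is after v
      right
      rw [slt_iff_coord]
      intro b
      have hlv : slt v u := hme ▸ hpw ℓ m hℓ hm hgt
      exact lt_of_le_of_lt (hv'le b) ((slt_iff_coord v u).mp hlv b)
  have hv'ne : v' ≠ v := by
    intro he
    have := hv'a
    rw [he] at this
    omega
  -- G is a face
  have hGface : IsFace n (insert v' (F.erase v)) := by
    constructor
    · intro u hu
      rcases Finset.mem_insert.mp hu with rfl | hu
      · rw [range_iff_coord]
        intro b
        by_cases hb : b = a
        · subst hb
          have := hvrange b
          simp [Finset.mem_Icc] at this ⊢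
          rw [hv'a]
          omega
        · rw [hv'b b hb]; exact hvrange b
      · exact hF.1.1 u (Finset.mem_of_mem_erase hu)
    · intro u hu w hw hne
      rcases Finset.mem_insert.mp hu with he | hu'
      · rcases Finset.mem_insert.mp hw with he' | hw'
        · exact absurd (he.trans he'.symm) hne
        · rw [he]
          exact (hcmp w (Finset.mem_of_mem_erase hw') (Finset.ne_of_mem_erase hw')).symm
      · rcases Finset.mem_insert.mp hw with he' | hw'
        · rw [he']
          exact hcmp u (Finset.mem_of_mem_erase hu') (Finset.ne_of_mem_erase hu')
        · exact hF.1.2 u (Finset.mem_of_mem_erase hu') w (Finset.mem_of_mem_erase hw') hne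
  refine ⟨hGface, ?_⟩
  -- maximality
  intro H hH hGH
  refine Finset.Subset.antisymm hGH ?_
  intro w hw
  by_contra hwG
  have hsub : F.erase v ⊆ H := fun u hu => hGH (Finset.mem_insert_of_mem hu)
  -- if w is comparable with v, we contradict maximality of F
  have hcomp : (slt w v ∨ slt v w) → False := by
    intro hc
    have hwnev : w ≠ v := by
      rintro rfl
      rcases hc with h | h <;> exact absurd h.1 (lt_irrefl _)
    have hwF : w ∉ F := by
      intro hwF
      exact hwG (Finset.mem_insert_of_mem (Finset.mem_erase.mpr ⟨hwnev, hwF⟩))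
    have hface : IsFace n (insert w F) := by
      constructor
      · intro u hu
        rcases Finset.mem_insert.mp hu with he | hu
        · rw [he]; exact hH.1 w hw
        · exact hF.1.1 u hu
      · intro u hu u' hu' hne
        rcases Finset.mem_insert.mp hu with he | huF
        · rcases Finset.mem_insert.mp hu' with he' | hu'F
          · exact absurd (he.trans he'.symm) hne
          · rw [he] at hne ⊢
            by_cases h' : u' = v
            · rw [h']; exact hc
            · exact hH.2 w hw u' (hsub (Finset.mem_erase.mpr ⟨h', hu'F⟩)) hne
        · rcases Finset.mem_insert.mp hu' with he' | hu'F
          · rw [he'] at hne ⊢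
            by_cases h' : u = v
            · rw [h']; exact hc.symm
            · exact hH.2 u (hsub (Finset.mem_erase.mpr ⟨h', huF⟩)) w hw hne
          · exact hF.1.2 u huF u' hu'F hne
    have heq := hF.2 _ hface (Finset.subset_insert w F)
    have : w ∈ F := by rw [heq]; exact Finset.mem_insert_self w F
    exact hwF this
  -- w is comparable with v'
  have hv'H : v' ∈ H := hGH (Finset.mem_insert_self _ _)
  have hwnev' : w ≠ v' := fun e => hwG (e ▸ Finset.mem_insert_self _ _)
  rcases hH.2 w hw v' hv'H hwnev' with h | h
  · -- w < v' ≤ v, so w < v : contradiction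
    refine hcomp (Or.inl ?_)
    rw [slt_iff_coord]
    intro b
    exact lt_of_lt_of_le ((slt_iff_coord w v').mp h b) (hv'le b)
  · -- v' < w
    by_cases hb : slt v w
    · exact hcomp (Or.inr hb)
    by_cases hb' : slt w v
    · exact hcomp (Or.inl hb')
    -- w incomparable with v
    rcases Nat.lt_or_ge (ℓ + 1) L.length with hlast | hlast
    · set u1 : V := L.get ⟨ℓ + 1, hlast⟩ with hu1def
      have hu1F : u1 ∈ F := by rw [← htf, List.mem_toFinset]; exact L.get_mem _
      have hvu1 : slt v u1 := hpw ℓ (ℓ + 1) hℓ hlast (by omega)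
      have hu1ne : u1 ≠ v := by
        intro he; rw [he] at hvu1; exact absurd hvu1.1 (lt_irrefl _)
      have hu1G : u1 ∈ F.erase v := Finset.mem_erase.mpr ⟨hu1ne, hu1F⟩
      have hwneu1 : w ≠ u1 :=
        fun e => hwG (e ▸ Finset.mem_insert_of_mem hu1G)
      rcases hH.2 w hw u1 (hsub hu1G) hwneu1 with h2 | h2
      · -- v' < w < u1 but min coordinate gap is 1
        have hm := hsafe_mid hlast
        obtain ⟨ha1, ha2, ha3⟩ := h
        obtain ⟨hb1, hb2, hb3⟩ := h2
        rw [← hu1def] at hm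
        omega
      · -- v < u1 < w, so v < w
        refine hcomp (Or.inr ?_)
        exact ⟨hvu1.1.trans h2.1, hvu1.2.1.trans h2.2.1, hvu1.2.2.trans h2.2.2⟩
    · -- last position: some coordinate of v' equals n
      have hml : ℓ + 1 = L.length := by omega
      have hl := hsafe_last hml
      have hrange := hH.1 w hw
      obtain ⟨ha1, ha2, ha3⟩ := h
      simp only [Finset.mem_Icc] at hrange
      omega
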